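/- For a monic-or-general univariate polynomial f ∈ ℂ[x] of degree d ≥ 1 with roots α₁,…,α_d, and a point z ∈ ℂ with f(z) ≠ 0, for every k with 1 ≤ k ≤ d one has |f^{(k)}(z)/f(z)|^{1/k} ≤ d / sep(f,z), where sep(f,z) := min_i |z − α_i|. -/

import Mathlib

open Polynomial Metric

lemma iter_deriv_add (k : ℕ) (p q : Polynomial ℂ) :
    Polynomial.derivative^[k] (p + q) = Polynomial.derivative^[k] p + Polynomial.derivative^[k] q := by
  induction k generalizing p q with
  | zero => rfl
  | succ k ih => simp [Function.iterate_succ_apply, derivative_add, ih]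

lemma iter_deriv_msum (k : ℕ) (S : Multiset (Polynomial ℂ)) :
    Polynomial.derivative^[k] S.sum = (S.map (Polynomial.derivative^[k])).sum := by
  induction S using Multiset.induction with
  | empty => simp [iterate_derivative_zero]
  | cons a s ih => simp [Multiset.sum_cons, iter_deriv_add, ih]

lemma aux_bound (z : ℂ) (ε : ℝ) (hε : 0 < ε) :
    ∀ k : ℕ, ∀ M : Multiset ℂ, (∀ a ∈ M, ε ≤ ‖z - a‖) →
    ‖(Polynomial.derivative^[k] (M.map (fun a => X - C a)).prod).eval z‖
      ≤ (M.card : ℝ) ^ k / ε ^ k * (M.map (fun a => ‖z - a‖)).prod := by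
  intro k
  induction k with
  | zero =>
    intro M hM
    simp only [Function.iterate_zero, id_eq, pow_zero, div_one, one_mul]
    rw [eval_multiset_prod]
    rw [Multiset.map_map]
    simp only [Function.comp_apply, eval_sub, eval_X, eval_C]
    rw [show ∀ s : Multiset ℂ, ‖s.prod‖ = (s.map norm).prod from fun s => map_multiset_prod (normHom (α := ℂ)) s, Multiset.map_map]
    exact le_of_eq rfl
  | succ k ih =>
    intro M hM
    rw [Function.iterate_succ_apply, derivative_prod]
    simp only [derivative_sub, derivative_X, derivative_C, sub_zero, mul_one]
    rw [iter_deriv_msum, Multiset.map_map]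
    have heval : ∀ T : Multiset (Polynomial ℂ), Polynomial.eval z T.sum = (T.map (Polynomial.eval z)).sum := by
      intro T; simpa using map_multiset_sum (Polynomial.evalRingHom z) T
    rw [heval, Multiset.map_map]
    calc ‖(Multiset.map (fun a => (Polynomial.derivative^[k] ((Multiset.map (fun b => X - C b) (M.erase a)).prod)).eval z) M).sum‖
        ≤ (Multiset.map (fun a => ‖(Polynomial.derivative^[k] ((Multiset.map (fun b => X - C b) (M.erase a)).prod)).eval z‖) M).sum := by
          have h := norm_multiset_sum_le (Multiset.map (fun a => (Polynomial.derivative^[k] ((Multiset.map (fun b => X - C b) (M.erase a)).prod)).eval z) M)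
          simpa [Multiset.map_map, Function.comp_def] using h
      _ ≤ (Multiset.map (fun _ : ℂ => (M.card : ℝ) ^ k / ε ^ k * ((Multiset.map (fun a => ‖z - a‖) M).prod / ε)) M).sum := by
          apply Multiset.sum_map_le_sum_map
          intro a ha
          have h1 := ih (M.erase a) (fun b hb => hM b (Multiset.mem_of_mem_erase hb))
          refine h1.trans ?_
          have hεk : (0:ℝ) < ε ^ k := pow_pos hε k
          have hprodE : ‖z - a‖ * (Multiset.map (fun b => ‖z - b‖) (M.erase a)).prod = (Multiset.map (fun b => ‖z - b‖) M).prod :=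
            Multiset.prod_map_erase (f := fun b => ‖z - b‖) ha
          have hnn : (0:ℝ) ≤ (Multiset.map (fun b => ‖z - b‖) (M.erase a)).prod :=
            Multiset.prod_nonneg (by intro x hx; obtain ⟨b, _, rfl⟩ := Multiset.mem_map.1 hx; positivity)
          have hc : ((M.erase a).card : ℝ) ≤ (M.card : ℝ) := by
            exact_mod_cast Multiset.card_le_card (Multiset.erase_le a M)
          have hprod2 : (Multiset.map (fun b => ‖z - b‖) (M.erase a)).prod
              ≤ (Multiset.map (fun b => ‖z - b‖) M).prod / ε := by
            rw [le_div_iff₀ hε, ← hprodE, mul_comm (‖z - a‖)]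
            exact mul_le_mul_of_nonneg_left (hM a ha) hnn
          have hb : (0:ℝ) ≤ (M.card : ℝ) ^ k / ε ^ k := by positivity
          refine mul_le_mul ?_ hprod2 hnn hb
          gcongr
      _ = (M.card : ℝ) ^ (k + 1) / ε ^ (k + 1) * (Multiset.map (fun a => ‖z - a‖) M).prod := by
          rw [Multiset.map_const', Multiset.sum_replicate]
          push_cast
          ring

theorem stmt0 (f : Polynomial ℂ) (d : ℕ) (hd : f.natDegree = d) (hd1 : 1 ≤ d)
    (z : ℂ) (hz : f.eval z ≠ 0) (k : ℕ) (hk1 : 1 ≤ k) (hkd : k ≤ d) :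
    (‖(Polynomial.derivative^[k] f).eval z / f.eval z‖) ^ ((1 : ℝ) / k)
      ≤ d / infDist z (f.rootSet ℂ) := by
  have hf0 : f ≠ 0 := fun h => hz (by simp [h])
  have hsplit : Splits f := IsAlgClosed.splits f
  have hroots : f.roots.card = f.natDegree := (splits_iff_card_roots).1 hsplit
  have hf : C f.leadingCoeff * (f.roots.map (fun a => X - C a)).prod = f :=
    C_leadingCoeff_mul_prod_multiset_X_sub_C hroots
  set ε := infDist z (f.rootSet ℂ) with hεdef
  have hmemroot : ∀ a ∈ f.roots, a ∈ f.rootSet ℂ := by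
    intro a ha
    rw [mem_rootSet]
    exact ⟨hf0, by simpa using (isRoot_of_mem_roots ha)⟩
  -- rootSet nonempty
  have hrne : (f.rootSet ℂ).Nonempty := by
    have : f.roots ≠ 0 := by
      intro h
      rw [h] at hroots; simp [hd] at hroots; omega
    obtain ⟨a, ha⟩ := Multiset.exists_mem_of_ne_zero this
    exact ⟨a, hmemroot a ha⟩
  have hclosed : IsClosed (f.rootSet ℂ) := (f.rootSet_finite ℂ).isClosed
  have hznot : z ∉ f.rootSet ℂ := by
    intro h
    rw [mem_rootSet] at h
    exact hz (by simpa using h.2)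
  have hε : 0 < ε := (hclosed.notMem_iff_infDist_pos hrne).1 hznot
  have hεle : ∀ a ∈ f.roots, ε ≤ ‖z - a‖ := by
    intro a ha
    have := infDist_le_dist_of_mem (x := z) (hmemroot a ha)
    rwa [Complex.dist_eq] at this
  have key := aux_bound z ε hε k f.roots hεle
  rw [hroots, hd] at key
  -- relate to f
  have hfk : Polynomial.derivative^[k] f = C f.leadingCoeff * Polynomial.derivative^[k] ((f.roots.map (fun a => X - C a)).prod) := by
    conv_lhs => rw [← hf]
    rw [iterate_derivative_C_mul]
  have hprodpos : 0 < (f.roots.map (fun a => ‖z - a‖)).prod :=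
    Multiset.prod_pos (by
      intro x hx
      obtain ⟨a, ha, rfl⟩ := Multiset.mem_map.1 hx
      exact lt_of_lt_of_le hε (hεle a ha))
  have hlc : 0 < ‖f.leadingCoeff‖ := by
    simpa using (norm_pos_iff.2 (leadingCoeff_ne_zero.2 hf0))
  have hfz : ‖f.eval z‖ = ‖f.leadingCoeff‖ * (f.roots.map (fun a => ‖z - a‖)).prod := by
    conv_lhs => rw [← hf]
    rw [eval_mul, eval_C, norm_mul, eval_multiset_prod, Multiset.map_map, show ∀ s : Multiset ℂ, ‖s.prod‖ = (s.map norm).prod from fun s => map_multiset_prod (normHom (α := ℂ)) s, Multiset.map_map]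
    simp [Function.comp_def]
  have hdiv : ‖(Polynomial.derivative^[k] f).eval z / f.eval z‖ ≤ ((d : ℝ) / ε) ^ k := by
    rw [norm_div, hfk, eval_mul, eval_C, norm_mul, hfz, div_pow, div_le_div_iff₀ (by positivity) (by positivity)]
    calc ‖f.leadingCoeff‖ * ‖(Polynomial.derivative^[k] ((f.roots.map (fun a => X - C a)).prod)).eval z‖ * ε ^ k
        ≤ ‖f.leadingCoeff‖ * ((d : ℝ) ^ k / ε ^ k * (f.roots.map (fun a => ‖z - a‖)).prod) * ε ^ k := by
          gcongr
      _ = (d : ℝ) ^ k * (‖f.leadingCoeff‖ * (f.roots.map (fun a => ‖z - a‖)).prod) := by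
          field_simp
  have hk0 : (k : ℝ) ≠ 0 := by positivity
  have base_nn : (0:ℝ) ≤ (d : ℝ) / ε := by positivity
  calc (‖(Polynomial.derivative^[k] f).eval z / f.eval z‖) ^ ((1 : ℝ) / k)
      ≤ (((d : ℝ) / ε) ^ k) ^ ((1 : ℝ) / k) := by
        apply Real.rpow_le_rpow (by positivity) hdiv (by positivity)
    _ = (d : ℝ) / ε := by
        rw [← Real.rpow_natCast ((d:ℝ)/ε) k, ← Real.rpow_mul base_nn]
        rw [mul_one_div, div_self hk0, Real.rpow_one]
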